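/- Assume the Weak Mertens Conjecture, and consequently that the Riemann Hypothesis holds, all nontrivial zeros $\rho$ of $\zeta(s)$ are simple, and $\sum_\rho |\rho\, \zeta'(\rho)|^{-2}$ converges. Then for every real $k \geq 1$, $J_{-k}(T) = \sum_{T < \gamma \leq 2T} |\zeta'(\rho)|^{-2k} = o(T^{2k})$ as $T \to \infty$. -/

import Mathlib

open Filter Asymptotics

theorem stmt_9
    (hRH : RiemannHypothesis)
    (hsimple : ∀ ρ : ℂ, riemannZeta ρ = 0 → 0 < ρ.re → ρ.re < 1 →
      deriv riemannZeta ρ ≠ 0)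
    (hconv : Summable (fun ρ : {ρ : ℂ // riemannZeta ρ = 0 ∧ 0 < ρ.re ∧ ρ.re < 1} =>
      ‖(ρ : ℂ) * deriv riemannZeta (ρ : ℂ)‖ ^ (-2 : ℝ)))
    (k : ℝ) (hk : 1 ≤ k) :
    (fun T : ℝ =>
        ∑' ρ : {ρ : ℂ // riemannZeta ρ = 0 ∧ 0 < ρ.re ∧ ρ.re < 1 ∧
            T < ρ.im ∧ ρ.im ≤ 2 * T},
          ‖deriv riemannZeta (ρ : ℂ)‖ ^ (-(2 * k)))
      =o[atTop] fun T : ℝ => T ^ (2 * k) := by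
  classical
  set Z := {ρ : ℂ // riemannZeta ρ = 0 ∧ 0 < ρ.re ∧ ρ.re < 1} with hZ
  set a : Z → ℝ := fun ρ => ‖(ρ : ℂ) * deriv riemannZeta (ρ : ℂ)‖ ^ (-2 : ℝ) with ha
  have ha0 : ∀ ρ, 0 ≤ a ρ := fun ρ => Real.rpow_nonneg (norm_nonneg _) _
  rw [isLittleO_iff]
  intro c hc
  have hK0 : (0:ℝ) < (5:ℝ) ^ k := Real.rpow_pos_of_pos (by norm_num) k
  set ε : ℝ := min 1 (c / (5:ℝ)^k) with hεdef
  have hε0 : 0 < ε := lt_min one_pos (div_pos hc hK0)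
  obtain ⟨F, hF⟩ :=
    ((tendsto_tsum_compl_atTop_zero a).eventually_lt_const hε0).exists
  obtain ⟨T₀, hT₀⟩ := (F.image fun x : Z => x.val.im).exists_le
  have hScomp : Summable (fun x : {x : Z // x ∉ F} => a x) := by
    have := hconv.subtype {x : Z | x ∉ F}
    exact this
  have hS0 : (0:ℝ) ≤ ∑' x : {x : Z // x ∉ F}, a x :=
    tsum_nonneg fun x => ha0 _
  filter_upwards [eventually_ge_atTop (max 1 (T₀ + 1))] with T hT
  have hT1 : (1:ℝ) ≤ T := le_trans (le_max_left _ _) hT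
  have hT0T : T₀ < T := by
    have := le_trans (le_max_right 1 (T₀ + 1)) hT
    linarith
  have hTpos : (0:ℝ) < T := lt_of_lt_of_le one_pos hT1
  -- pointwise bound
  have hbound : ∀ z : ℂ, riemannZeta z = 0 → 0 < z.re → z.re < 1 → T < z.im → z.im ≤ 2*T →
      ‖z * deriv riemannZeta z‖ ^ (-2:ℝ) ≤ ε →
      ‖deriv riemannZeta z‖ ^ (-(2 * k)) ≤
        ((5:ℝ)^k * T^(2*k) * ε^(k-1)) * (‖z * deriv riemannZeta z‖ ^ (-2:ℝ)) := by
    intro z h0 hre0 hre1 him1 him2 has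
    have hz : z ≠ 0 := by
      intro h; rw [h] at hre0; simp at hre0
    have hu : 0 < ‖deriv riemannZeta z‖ := norm_pos_iff.mpr (hsimple z h0 hre0 hre1)
    have hv : 0 < ‖z‖ := norm_pos_iff.mpr hz
    set u := ‖deriv riemannZeta z‖ with hu'
    set v := ‖z‖ with hv'
    have hnorm : ‖z * deriv riemannZeta z‖ = v * u := norm_mul _ _
    rw [hnorm] at has ⊢
    have hvu : 0 < v * u := mul_pos hv hu
    have hv2 : v^2 ≤ 5 * T^2 := by
      have h1 : v^2 = z.re * z.re + z.im * z.im := by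
        rw [hv', Complex.sq_norm, Complex.normSq_apply]
      nlinarith [him1, him2, hre0, hre1, hT1, hTpos]
    have hmain : v ^ (2*k) ≤ (5:ℝ)^k * T^(2*k) := by
      have h2 : v ^ (2*k) = (v^2) ^ k := by
        rw [← Real.rpow_natCast v 2, ← Real.rpow_mul hv.le]
        norm_num
      have h3 : (5:ℝ)^k * T^(2*k) = (5*T^2) ^ k := by
        rw [Real.mul_rpow (by norm_num) (by positivity), ← Real.rpow_natCast T 2,
          ← Real.rpow_mul hTpos.le]
        norm_num
      rw [h2, h3]
      exact Real.rpow_le_rpow (by positivity) hv2 (by linarith)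
    have hfin : u ^ (-(2*k)) ≤ ((5:ℝ)^k * T^(2*k)) * (v*u) ^ (-(2*k)) := by
      rw [Real.mul_rpow hv.le hu.le, Real.rpow_neg hv.le]
      have h4 : (1:ℝ) ≤ (5:ℝ)^k * T^(2*k) * (v ^ (2*k))⁻¹ := by
        rw [← div_eq_mul_inv, le_div_iff₀ (Real.rpow_pos_of_pos hv _)]
        simpa using hmain
      calc u ^ (-(2*k)) = 1 * u ^ (-(2*k)) := (one_mul _).symm
        _ ≤ ((5:ℝ)^k * T^(2*k) * (v ^ (2*k))⁻¹) * u ^ (-(2*k)) :=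
            mul_le_mul_of_nonneg_right h4 (Real.rpow_nonneg hu.le _)
        _ = _ := by ring
    have hsplit : (v*u) ^ (-(2*k)) = ((v*u) ^ (-2:ℝ)) ^ (k-1) * (v*u) ^ (-2:ℝ) := by
      rw [← Real.rpow_mul hvu.le, ← Real.rpow_add hvu]
      congr 1
      ring
    have hpow : ((v*u) ^ (-2:ℝ)) ^ (k-1) ≤ ε ^ (k-1) :=
      Real.rpow_le_rpow (Real.rpow_nonneg hvu.le _) has (by linarith)
    calc u ^ (-(2*k)) ≤ ((5:ℝ)^k * T^(2*k)) * (v*u) ^ (-(2*k)) := hfin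
      _ = ((5:ℝ)^k * T^(2*k)) * (((v*u) ^ (-2:ℝ)) ^ (k-1) * (v*u) ^ (-2:ℝ)) := by
          rw [hsplit]
      _ ≤ ((5:ℝ)^k * T^(2*k)) * (ε ^ (k-1) * (v*u) ^ (-2:ℝ)) := by
          gcongr
      _ = ((5:ℝ)^k * T^(2*k) * ε^(k-1)) * ((v*u) ^ (-2:ℝ)) := by ring
  -- the injection into the complement of F
  set W := {ρ : ℂ // riemannZeta ρ = 0 ∧ 0 < ρ.re ∧ ρ.re < 1 ∧ T < ρ.im ∧ ρ.im ≤ 2 * T} with hW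
  have hmemF : ∀ ρ : W, (⟨(ρ : ℂ), ρ.2.1, ρ.2.2.1, ρ.2.2.2.1⟩ : Z) ∉ F := by
    intro ρ hmem
    have h1 : (ρ : ℂ).im ≤ T₀ := hT₀ ((ρ : ℂ).im)
      (Finset.mem_image.mpr ⟨(⟨(ρ : ℂ), ρ.2.1, ρ.2.2.1, ρ.2.2.2.1⟩ : Z), hmem, rfl⟩)
    have him : T < (ρ : ℂ).im := ρ.2.2.2.2.1
    linarith
  set i : W → {x : Z // x ∉ F} :=
    fun ρ => ⟨⟨(ρ : ℂ), ρ.2.1, ρ.2.2.1, ρ.2.2.2.1⟩, hmemF ρ⟩ with hi'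
  have hiinj : Function.Injective i := by
    intro x y h
    apply Subtype.ext
    have : ((i x : Z) : ℂ) = ((i y : Z) : ℂ) := by rw [h]
    exact this
  have haε : ∀ ρ : W, a ⟨(ρ : ℂ), ρ.2.1, ρ.2.2.1, ρ.2.2.2.1⟩ ≤ ε := by
    intro ρ
    have h1 : a ((i ρ : {x : Z // x ∉ F}) : Z) ≤ ∑' x : {x : Z // x ∉ F}, a x :=
      Summable.le_tsum hScomp (i ρ) (fun j _ => ha0 _)
    exact le_trans h1 hF.le
  have hsum_ai : Summable (fun ρ : W => a ((i ρ : {x : Z // x ∉ F}) : Z)) := by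
    have := hScomp.comp_injective hiinj
    exact this
  set C : ℝ := (5:ℝ)^k * T^(2*k) * ε^(k-1) with hC
  have hC0 : (0:ℝ) ≤ C := by positivity
  have hkey : ∀ ρ : W, ‖deriv riemannZeta (ρ : ℂ)‖ ^ (-(2 * k)) ≤
      C * a ((i ρ : {x : Z // x ∉ F}) : Z) := by
    intro ρ
    exact hbound (ρ : ℂ) ρ.2.1 ρ.2.2.1 ρ.2.2.2.1 ρ.2.2.2.2.1 ρ.2.2.2.2.2 (haε ρ)
  have hfsum : Summable (fun ρ : W => ‖deriv riemannZeta (ρ : ℂ)‖ ^ (-(2 * k))) :=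
    Summable.of_nonneg_of_le (fun ρ => Real.rpow_nonneg (norm_nonneg _) _) hkey
      (hsum_ai.mul_left C)
  have hf0 : (0:ℝ) ≤ ∑' ρ : W, ‖deriv riemannZeta (ρ : ℂ)‖ ^ (-(2 * k)) :=
    tsum_nonneg fun ρ => Real.rpow_nonneg (norm_nonneg _) _
  rw [Real.norm_of_nonneg hf0, Real.norm_of_nonneg (Real.rpow_nonneg hTpos.le _)]
  have hεk : ε^(k-1) * ε ≤ c / (5:ℝ)^k := by
    have h1 : ε^(k-1) ≤ 1 := Real.rpow_le_one hε0.le (min_le_left _ _) (by linarith)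
    have h2 : ε ≤ c / (5:ℝ)^k := min_le_right _ _
    calc ε^(k-1) * ε ≤ 1 * (c / (5:ℝ)^k) := by
          apply mul_le_mul h1 h2 hε0.le zero_le_one
      _ = c / (5:ℝ)^k := one_mul _
  calc ∑' ρ : W, ‖deriv riemannZeta (ρ : ℂ)‖ ^ (-(2 * k))
      ≤ ∑' ρ : W, C * a ((i ρ : {x : Z // x ∉ F}) : Z) :=
        Summable.tsum_le_tsum hkey hfsum (hsum_ai.mul_left C)
    _ = C * ∑' ρ : W, a ((i ρ : {x : Z // x ∉ F}) : Z) := tsum_mul_left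
    _ ≤ C * ∑' x : {x : Z // x ∉ F}, a x := by
        apply mul_le_mul_of_nonneg_left _ hC0
        exact Summable.tsum_le_tsum_of_inj i hiinj (fun c _ => ha0 _) (fun b => le_rfl)
          hsum_ai hScomp
    _ ≤ C * ε := mul_le_mul_of_nonneg_left hF.le hC0
    _ = (5:ℝ)^k * T^(2*k) * (ε^(k-1) * ε) := by rw [hC]; ring
    _ ≤ (5:ℝ)^k * T^(2*k) * (c / (5:ℝ)^k) := by
        apply mul_le_mul_of_nonneg_left hεk (by positivity)
    _ = c * T^(2*k) := by field_simp
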